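/- Let n ∈ ℕ, let f : ℝ^n → ℝ be convex and differentiable at x₀ ∈ ℝ^n, let r > 0 and C ≥ 0, and let φ be twice continuously differentiable on the open ball B(x₀, 2r) with |y · (Hess φ(z)) y| ≤ C|y|² for all z ∈ B(x₀, 2r) and all y ∈ ℝ^n. Suppose that f − φ has a local maximum at x₀ over B(x₀, 2r), i.e. f(z) − φ(z) ≤ f(x₀) − φ(x₀) for all z ∈ B(x₀, 2r). Then ∇f(x₀) = ∇φ(x₀), and for every y ∈ ℝ^n with |y| ≤ r: 0 ≤ f(x₀ + y) − f(x₀) − y·∇f(x₀) ≤ (C/2)|y|². -/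

import Mathlib

open scoped InnerProductSpace

/-- If `f` is convex and differentiable at `x₀`, `φ` is `C²` on
`B(x₀, 2r)` with Hessian quadratic form bounded by `C|y|²`, and `f − φ` has a local maximum
at `x₀` over `B(x₀, 2r)`, then `∇f(x₀) = ∇φ(x₀)` and
`0 ≤ f(x₀+y) − f(x₀) − y·∇f(x₀) ≤ (C/2)|y|²` for every `|y| ≤ r`. -/
theorem stmt7 {n : ℕ} (f φ : EuclideanSpace ℝ (Fin n) → ℝ)
    (x₀ : EuclideanSpace ℝ (Fin n)) (r C : ℝ) (hr : 0 < r) (hC : 0 ≤ C)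
    (hf : ConvexOn ℝ Set.univ f) (hdf : DifferentiableAt ℝ f x₀)
    (hφ : ContDiffOn ℝ 2 φ (Metric.ball x₀ (2 * r)))
    (hHess : ∀ z ∈ Metric.ball x₀ (2 * r), ∀ y : EuclideanSpace ℝ (Fin n),
      |fderiv ℝ (fderiv ℝ φ) z y y| ≤ C * ‖y‖ ^ 2)
    (hmax : ∀ z ∈ Metric.ball x₀ (2 * r), f z - φ z ≤ f x₀ - φ x₀) :
    gradient f x₀ = gradient φ x₀ ∧
    ∀ y : EuclideanSpace ℝ (Fin n), ‖y‖ ≤ r →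
      0 ≤ f (x₀ + y) - f x₀ - ⟪y, gradient f x₀⟫_ℝ ∧
      f (x₀ + y) - f x₀ - ⟪y, gradient f x₀⟫_ℝ ≤ C / 2 * ‖y‖ ^ 2 := by
  have h2r : (0:ℝ) < 2 * r := by linarith
  have hx₀ : x₀ ∈ Metric.ball x₀ (2 * r) := Metric.mem_ball_self h2r
  have hball : Metric.ball x₀ (2 * r) ∈ nhds x₀ := Metric.isOpen_ball.mem_nhds hx₀
  have hφx : ContDiffAt ℝ 2 φ x₀ := hφ.contDiffAt hball
  have hdφ : DifferentiableAt ℝ φ x₀ := hφx.differentiableAt (by norm_num)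
  -- gradient equality
  have hlm : IsLocalMax (fun z => f z - φ z) x₀ := by
    filter_upwards [hball] with z hz using hmax z hz
  have hfd0 : fderiv ℝ (fun z => f z - φ z) x₀ = 0 := hlm.fderiv_eq_zero
  have hfder : fderiv ℝ f x₀ = fderiv ℝ φ x₀ := by
    have h := fderiv_fun_sub hdf hdφ
    rw [hfd0] at h
    exact (sub_eq_zero.mp h.symm)
  have hgrad : gradient f x₀ = gradient φ x₀ := by
    unfold gradient
    rw [hfder]
  refine ⟨hgrad, ?_⟩
  -- fderiv applied = inner with gradient
  have hinner : ∀ v : EuclideanSpace ℝ (Fin n), fderiv ℝ f x₀ v = ⟪v, gradient f x₀⟫_ℝ := by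
    intro v
    have h1 : HasFDerivAt f (InnerProductSpace.toDual ℝ _ (gradient f x₀)) x₀ :=
      hasGradientAt_iff_hasFDerivAt.mp hdf.hasGradientAt
    rw [h1.fderiv]
    rw [InnerProductSpace.toDual_apply_apply, real_inner_comm]
  intro y hy
  -- the path
  set c : ℝ → EuclideanSpace ℝ (Fin n) := fun t => x₀ + t • y with hc_def
  have hc : ∀ t : ℝ, HasDerivAt c y t := by
    intro t
    simpa [hc_def] using (((hasDerivAt_id t).smul_const y).const_add x₀)
  have hmem : ∀ t ∈ Set.Ioo (-1:ℝ) 2, c t ∈ Metric.ball x₀ (2 * r) := by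
    rintro t ⟨ht1, ht2⟩
    simp only [hc_def, Metric.mem_ball, dist_eq_norm, add_sub_cancel_left, norm_smul,
      Real.norm_eq_abs]
    have h1 : |t| < 2 := abs_lt.mpr ⟨by linarith, ht2⟩
    nlinarith [abs_nonneg t, norm_nonneg y]
  have hg1 : ∀ t ∈ Set.Ioo (-1:ℝ) 2, HasDerivAt (fun s => φ (c s)) (fderiv ℝ φ (c t) y) t := by
    intro t ht
    have hφt : ContDiffAt ℝ 2 φ (c t) :=
      hφ.contDiffAt (Metric.isOpen_ball.mem_nhds (hmem t ht))
    exact ((hφt.differentiableAt (by norm_num)).hasFDerivAt).comp_hasDerivAt t (hc t)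
  have hg2 : ∀ t ∈ Set.Ioo (-1:ℝ) 2,
      HasDerivAt (fun s => fderiv ℝ φ (c s) y) (fderiv ℝ (fderiv ℝ φ) (c t) y y) t := by
    intro t ht
    have hφt : ContDiffAt ℝ 2 φ (c t) :=
      hφ.contDiffAt (Metric.isOpen_ball.mem_nhds (hmem t ht))
    have h1 : DifferentiableAt ℝ (fderiv ℝ φ) (c t) :=
      (hφt.fderiv_right (m := 1) (by norm_num)).differentiableAt one_ne_zero
    have h2 : HasDerivAt (fun s => fderiv ℝ φ (c s)) (fderiv ℝ (fderiv ℝ φ) (c t) y) t :=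
      h1.hasFDerivAt.comp_hasDerivAt t (hc t)
    exact ((ContinuousLinearMap.apply ℝ ℝ y).hasFDerivAt).comp_hasDerivAt t h2
  have hsub : Set.Icc (0:ℝ) 1 ⊆ Set.Ioo (-1:ℝ) 2 := fun t ht => ⟨by linarith [ht.1], by linarith [ht.2]⟩
  have hc0 : c 0 = x₀ := by simp [hc_def]
  have hc1 : c 1 = x₀ + y := by simp [hc_def]
  -- Lipschitz bound on derivative of φ ∘ c
  have key : ∀ t ∈ Set.Icc (0:ℝ) 1,
      |fderiv ℝ φ (c t) y - fderiv ℝ φ x₀ y| ≤ C * ‖y‖ ^ 2 * t := by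
    intro t ht
    have := Convex.norm_image_sub_le_of_norm_hasDerivWithin_le
      (f := fun s => fderiv ℝ φ (c s) y) (f' := fun s => fderiv ℝ (fderiv ℝ φ) (c s) y y)
      (s := Set.Icc (0:ℝ) 1) (C := C * ‖y‖ ^ 2)
      (fun s hs => (hg2 s (hsub hs)).hasDerivWithinAt)
      (fun s hs => hHess (c s) (hmem s (hsub hs)) y)
      (convex_Icc 0 1) (Set.left_mem_Icc.mpr zero_le_one) ht
    simp only [hc0, sub_zero, Real.norm_eq_abs] at this
    simpa [abs_of_nonneg ht.1] using this
  -- the auxiliary function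
  set A : ℝ → ℝ := fun t => φ (c t) - t * (fderiv ℝ φ x₀ y) - C / 2 * ‖y‖ ^ 2 * t ^ 2 with hA_def
  have hA' : ∀ t ∈ Set.Ioo (-1:ℝ) 2, HasDerivAt A
      (fderiv ℝ φ (c t) y - fderiv ℝ φ x₀ y - C * ‖y‖ ^ 2 * t) t := by
    intro t ht
    have h1 := ((hg1 t ht).sub ((hasDerivAt_id t).mul_const (fderiv ℝ φ x₀ y))).sub
      ((hasDerivAt_pow 2 t).const_mul (C / 2 * ‖y‖ ^ 2))
    refine h1.congr_deriv ?_
    ring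
  have hanti : AntitoneOn A (Set.Icc 0 1) := by
    apply antitoneOn_of_deriv_nonpos (convex_Icc 0 1)
    · intro t ht
      exact ((hA' t (hsub ht)).continuousAt).continuousWithinAt
    · rw [interior_Icc]
      intro t ht
      exact ((hA' t (hsub (Set.Ioo_subset_Icc_self ht))).differentiableAt).differentiableWithinAt
    · rw [interior_Icc]
      intro t ht
      rw [(hA' t (hsub (Set.Ioo_subset_Icc_self ht))).deriv]
      have hk := key t (Set.Ioo_subset_Icc_self ht)
      have := abs_le.mp hk
      linarith [this.2]
  have hA10 : A 1 ≤ A 0 := hanti (Set.left_mem_Icc.mpr zero_le_one)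
    (Set.right_mem_Icc.mpr zero_le_one) zero_le_one
  have hTaylor : φ (x₀ + y) - φ x₀ - fderiv ℝ φ x₀ y ≤ C / 2 * ‖y‖ ^ 2 := by
    simp only [hA_def, hc0, hc1] at hA10
    nlinarith [hA10]
  -- lower bound via convexity
  have hconv : ConvexOn ℝ Set.univ (fun t : ℝ => f (c t)) := by
    have := hf.comp_affineMap (AffineMap.lineMap x₀ (x₀ + y) : ℝ →ᵃ[ℝ] EuclideanSpace ℝ (Fin n))
    simp only [Set.preimage_univ] at this
    refine Eq.subst (motive := fun g => ConvexOn ℝ Set.univ g) (?_ : f ∘ ⇑(AffineMap.lineMap x₀ (x₀ + y)) = _) this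
    funext t
    simp [hc_def, AffineMap.lineMap_apply, add_comm]
  have hder0 : HasDerivAt (fun t : ℝ => f (c t)) (fderiv ℝ f x₀ y) 0 := by
    have h : HasFDerivAt f (fderiv ℝ f x₀) (c 0) := hc0 ▸ hdf.hasFDerivAt
    exact h.comp_hasDerivAt 0 (hc 0)
  have hlow : fderiv ℝ f x₀ y ≤ f (x₀ + y) - f x₀ := by
    have := hconv.le_slope_of_hasDerivAt (Set.mem_univ 0) (Set.mem_univ 1) zero_lt_one hder0
    simpa [slope_def_field, hc0, hc1] using this
  -- upper bound via local max and Taylor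
  have hxy_mem : x₀ + y ∈ Metric.ball x₀ (2 * r) := by
    simp only [Metric.mem_ball, dist_eq_norm, add_sub_cancel_left]
    linarith
  have hup : f (x₀ + y) - f x₀ ≤ φ (x₀ + y) - φ x₀ := by
    have := hmax (x₀ + y) hxy_mem
    linarith
  have hfeq : fderiv ℝ f x₀ y = ⟪y, gradient f x₀⟫_ℝ := hinner y
  have hφeq : fderiv ℝ φ x₀ y = fderiv ℝ f x₀ y := by rw [hfder]
  constructor
  · rw [← hfeq]; linarith
  · rw [← hfeq]; linarith [hTaylor, hup, hφeq]
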